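/- For every s ∈ ℕ, if H is the disjoint union of graphs H_1 and H_2, then there exists a constant C depending only on s and H such that for all n, ex(n, {K_{s,s}, H-ind}) ≤ C·(ex(n, {K_{s,s}, H_1-ind}) + ex(n, {K_{s,s}, H_2-ind}) + n). -/

import Mathlib

open SimpleGraph

/-- A (not necessarily induced) copy of `H` in `G`: an injective map on vertices
sending edges to edges. -/
def HasCopy {V β : Type*} (G : SimpleGraph V) (H : SimpleGraph β) : Prop :=
  ∃ f : β ↪ V, ∀ a b, H.Adj a b → G.Adj (f a) (f b)

/-- An induced copy of `H` in `G`: an injective map on vertices preserving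
adjacency and non-adjacency. -/
def HasInducedCopy {V β : Type*} (G : SimpleGraph V) (H : SimpleGraph β) : Prop :=
  ∃ f : β ↪ V, ∀ a b, G.Adj (f a) (f b) ↔ H.Adj a b

/-- The number of edges of a graph on `Fin n`. -/
noncomputable def edgeCount {n : ℕ} (G : SimpleGraph (Fin n)) : ℕ := Nat.card G.edgeSet

/-- The complete bipartite graph `K_{s,s}`. -/
def Kss (s : ℕ) : SimpleGraph (Fin s ⊕ Fin s) := completeBipartiteGraph (Fin s) (Fin s)

/-- `ex(n, H)`: the maximum number of edges of an `n`-vertex graph with no copy of `H`. -/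
noncomputable def exNum {β : Type*} (n : ℕ) (H : SimpleGraph β) : ℕ :=
  sSup {m | ∃ G : SimpleGraph (Fin n), ¬ HasCopy G H ∧ edgeCount G = m}

/-- `ex(n, {K_{s,s}, H-ind})`: the maximum number of edges of an `n`-vertex graph with no
`K_{s,s}` subgraph and no induced copy of `H`. -/
noncomputable def exIndNum {β : Type*} (s n : ℕ) (H : SimpleGraph β) : ℕ :=
  sSup {m | ∃ G : SimpleGraph (Fin n),
    ¬ HasCopy G (Kss s) ∧ ¬ HasInducedCopy G H ∧ edgeCount G = m}

/-! ### Auxiliary definitions -/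

open Finset

open scoped Classical

section Aux

variable {n : ℕ}

/-- The spanning subgraph of `G` keeping only edges inside `W`. -/
def restrictTo (G : SimpleGraph (Fin n)) (W : Finset (Fin n)) : SimpleGraph (Fin n) where
  Adj x y := G.Adj x y ∧ x ∈ W ∧ y ∈ W
  symm := ⟨fun x y h => ⟨h.1.symm, h.2.2, h.2.1⟩⟩
  loopless := ⟨fun x h => G.loopless.irrefl x h.1⟩

@[simp] lemma restrictTo_adj {G : SimpleGraph (Fin n)} {W : Finset (Fin n)} {x y : Fin n} :
    (restrictTo G W).Adj x y ↔ G.Adj x y ∧ x ∈ W ∧ y ∈ W := Iff.rfl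

lemma restrictTo_univ (G : SimpleGraph (Fin n)) : restrictTo G Finset.univ = G := by
  ext x y; simp

/-- An induced copy of `H` in `G` lying inside the vertex set `W`. -/
def IndCopyIn {β : Type*} (G : SimpleGraph (Fin n)) (H : SimpleGraph β)
    (W : Finset (Fin n)) : Prop :=
  ∃ f : β ↪ Fin n, (∀ a, f a ∈ W) ∧ ∀ a b, G.Adj (f a) (f b) ↔ H.Adj a b

lemma IndCopyIn.mono {β : Type*} {G : SimpleGraph (Fin n)} {H : SimpleGraph β}
    {W W' : Finset (Fin n)} (h : IndCopyIn G H W) (hWW : W ⊆ W') : IndCopyIn G H W' := by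
  obtain ⟨f, hmem, hadj⟩ := h
  exact ⟨f, fun a => hWW (hmem a), hadj⟩

/-- `A` is the image of an induced copy of `H` in `G`. -/
def IsCopyImg {β : Type*} [Fintype β] (G : SimpleGraph (Fin n)) (H : SimpleGraph β)
    (A : Finset (Fin n)) : Prop :=
  ∃ f : β ↪ Fin n, (∀ a b, G.Adj (f a) (f b) ↔ H.Adj a b) ∧ A = Finset.univ.image f

lemma IsCopyImg.card {β : Type*} [Fintype β] {G : SimpleGraph (Fin n)} {H : SimpleGraph β}
    {A : Finset (Fin n)} (h : IsCopyImg G H A) : A.card = Fintype.card β := by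
  obtain ⟨f, -, rfl⟩ := h
  rw [Finset.card_image_of_injective _ f.injective, Finset.card_univ]

lemma hasCopy_mono {V β : Type*} {G G' : SimpleGraph V} {H : SimpleGraph β}
    (hle : ∀ a b, G.Adj a b → G'.Adj a b) (h : HasCopy G H) : HasCopy G' H := by
  obtain ⟨f, hf⟩ := h
  exact ⟨f, fun a b hab => hle _ _ (hf a b hab)⟩

/-! ### Edge counting -/

lemma edgeCount_eq_card (G : SimpleGraph (Fin n)) : edgeCount G = G.edgeFinset.card := by
  rw [edgeCount, Nat.card_eq_fintype_card, SimpleGraph.edgeFinset_card]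

lemma edgeCount_restrict_le (G : SimpleGraph (Fin n)) (W : Finset (Fin n)) :
    edgeCount (restrictTo G W) ≤ W.card * W.card := by
  rw [edgeCount_eq_card]
  have hsub : (restrictTo G W).edgeFinset ⊆ (W ×ˢ W).image (fun p => s(p.1, p.2)) := by
    refine fun e => Sym2.ind (fun x y he => ?_) e
    rw [SimpleGraph.mem_edgeFinset, SimpleGraph.mem_edgeSet] at he
    exact Finset.mem_image.2 ⟨(x, y), Finset.mem_product.2 ⟨he.2.1, he.2.2⟩, rfl⟩
  calc (restrictTo G W).edgeFinset.card ≤ ((W ×ˢ W).image (fun p => s(p.1, p.2))).card :=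
        Finset.card_le_card hsub
    _ ≤ (W ×ˢ W).card := Finset.card_image_le
    _ = W.card * W.card := Finset.card_product _ _

lemma edgeCount_le_sq (G : SimpleGraph (Fin n)) : edgeCount G ≤ n * n := by
  have h := edgeCount_restrict_le G Finset.univ
  rw [restrictTo_univ] at h
  simpa using h

lemma bddAbove_exSet {β : Type*} (s : ℕ) (H : SimpleGraph β) :
    BddAbove {m | ∃ G : SimpleGraph (Fin n),
      ¬ HasCopy G (Kss s) ∧ ¬ HasInducedCopy G H ∧ edgeCount G = m} := by
  refine ⟨n * n, fun m hm => ?_⟩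
  obtain ⟨G, -, -, rfl⟩ := hm
  exact edgeCount_le_sq G

lemma le_exIndNum {β : Type*} {s : ℕ} {H : SimpleGraph β} (G : SimpleGraph (Fin n))
    (h1 : ¬ HasCopy G (Kss s)) (h2 : ¬ HasInducedCopy G H) :
    edgeCount G ≤ exIndNum s n H :=
  le_csSup (bddAbove_exSet s H) ⟨G, h1, h2, rfl⟩

lemma filter_mem_edge_card_le (G : SimpleGraph (Fin n)) (x : Fin n) :
    (G.edgeFinset.filter (fun e => x ∈ e)).card ≤ n := by
  have : ∀ e ∈ G.edgeFinset.filter (fun e => x ∈ e),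
      (if h : x ∈ e then Sym2.Mem.other h else x) ∈ (Finset.univ : Finset (Fin n)) :=
    fun e _ => Finset.mem_univ _
  have hinj : Set.InjOn (fun e => if h : x ∈ e then Sym2.Mem.other h else x)
      ↑(G.edgeFinset.filter (fun e => x ∈ e)) := by
    intro e1 h1 e2 h2 heq
    have hx1 : x ∈ e1 := (Finset.mem_filter.1 h1).2
    have hx2 : x ∈ e2 := (Finset.mem_filter.1 h2).2
    simp only [dif_pos hx1, dif_pos hx2] at heq
    rw [← Sym2.other_spec hx1, ← Sym2.other_spec hx2, heq]
  calc (G.edgeFinset.filter (fun e => x ∈ e)).card ≤ (Finset.univ : Finset (Fin n)).card :=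
      Finset.card_le_card_of_injOn _ this hinj
    _ = n := by simp

lemma edgeCount_restrict_sdiff (G : SimpleGraph (Fin n)) (W D : Finset (Fin n)) :
    edgeCount (restrictTo G W) ≤ edgeCount (restrictTo G (W \ D)) + D.card * n := by
  rw [edgeCount_eq_card, edgeCount_eq_card]
  have hsub : (restrictTo G W).edgeFinset ⊆ (restrictTo G (W \ D)).edgeFinset ∪
      D.biUnion (fun x => (restrictTo G W).edgeFinset.filter (fun e => x ∈ e)) := by
    refine fun e => Sym2.ind (fun u v he => ?_) e
    have he' := he
    rw [SimpleGraph.mem_edgeFinset, SimpleGraph.mem_edgeSet] at he'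
    obtain ⟨hadj, hu, hv⟩ := he'
    by_cases hud : u ∈ D
    · exact Finset.mem_union_right _ (Finset.mem_biUnion.2
        ⟨u, hud, Finset.mem_filter.2 ⟨he, Sym2.mem_mk_left _ _⟩⟩)
    by_cases hvd : v ∈ D
    · exact Finset.mem_union_right _ (Finset.mem_biUnion.2
        ⟨v, hvd, Finset.mem_filter.2 ⟨he, Sym2.mem_mk_right _ _⟩⟩)
    · refine Finset.mem_union_left _ ?_
      rw [SimpleGraph.mem_edgeFinset, SimpleGraph.mem_edgeSet]
      exact ⟨hadj, Finset.mem_sdiff.2 ⟨hu, hud⟩, Finset.mem_sdiff.2 ⟨hv, hvd⟩⟩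
  calc (restrictTo G W).edgeFinset.card
      ≤ ((restrictTo G (W \ D)).edgeFinset ∪
          D.biUnion (fun x => (restrictTo G W).edgeFinset.filter (fun e => x ∈ e))).card :=
        Finset.card_le_card hsub
    _ ≤ (restrictTo G (W \ D)).edgeFinset.card +
          (D.biUnion (fun x => (restrictTo G W).edgeFinset.filter (fun e => x ∈ e))).card :=
        Finset.card_union_le _ _
    _ ≤ (restrictTo G (W \ D)).edgeFinset.card + D.card * n := by
        refine Nat.add_le_add_left ?_ _
        refine le_trans (Finset.card_biUnion_le) ?_
        calc (∑ x ∈ D, ((restrictTo G W).edgeFinset.filter (fun e => x ∈ e)).card)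
            ≤ D.card * n := by
              rw [← smul_eq_mul]
              exact Finset.sum_le_card_nsmul _ _ _
                (fun x _ => filter_mem_edge_card_le (restrictTo G W) x)

end Aux
section Core

variable {n : ℕ}

/-- From two disjoint `s`-sets with all cross pairs adjacent, get a `K_{s,s}` copy. -/
lemma kss_of (G : SimpleGraph (Fin n)) {s : ℕ} {S T : Finset (Fin n)}
    (hS : S.card = s) (hT : T.card = s) (hd : Disjoint S T)
    (hadj : ∀ x ∈ S, ∀ y ∈ T, G.Adj x y) : HasCopy G (Kss s) := by
  have hScard : Fintype.card ↥S = s := by simp [hS]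
  have hTcard : Fintype.card ↥T = s := by simp [hT]
  let eS : ↥S ≃ Fin s := Fintype.equivFinOfCardEq hScard
  let eT : ↥T ≃ Fin s := Fintype.equivFinOfCardEq hTcard
  refine ⟨⟨Sum.elim (fun i => (eS.symm i : Fin n)) (fun i => (eT.symm i : Fin n)), ?_⟩, ?_⟩
  · rintro (i | i) (j | j) h
    · simp only [Sum.elim_inl] at h
      rw [show i = j from eS.symm.injective (Subtype.coe_injective h)]
    · exfalso
      have h1 : ((eS.symm i : Fin n)) ∈ S := (eS.symm i).2
      have h2 : ((eT.symm j : Fin n)) ∈ T := (eT.symm j).2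
      simp only [Sum.elim_inl, Sum.elim_inr] at h
      exact Finset.disjoint_left.1 hd h1 (h ▸ h2)
    · exfalso
      have h1 : ((eT.symm i : Fin n)) ∈ T := (eT.symm i).2
      have h2 : ((eS.symm j : Fin n)) ∈ S := (eS.symm j).2
      simp only [Sum.elim_inl, Sum.elim_inr] at h
      exact Finset.disjoint_left.1 hd h2 (h ▸ h1)
    · simp only [Sum.elim_inr] at h
      rw [show i = j from eT.symm.injective (Subtype.coe_injective h)]
  · rintro (i | i) (j | j) hab
    · simp [Kss] at hab
    · exact hadj _ (eS.symm i).2 _ (eT.symm j).2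
    · exact (hadj _ (eS.symm j).2 _ (eT.symm i).2).symm
    · simp [Kss] at hab

/-- Erdős–Szekeres Ramsey bound, Finset version. -/
lemma ram (G : SimpleGraph (Fin n)) :
    ∀ (N a b : ℕ) (W : Finset (Fin n)), a + b = N → 2 ^ (a + b) ≤ W.card →
      (∃ T ⊆ W, T.card = a ∧ ∀ x ∈ T, ∀ y ∈ T, x ≠ y → G.Adj x y) ∨
      (∃ T ⊆ W, T.card = b ∧ ∀ x ∈ T, ∀ y ∈ T, x ≠ y → ¬ G.Adj x y) := by
  intro N
  induction N with
  | zero =>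
    intro a b W hab _
    have ha : a = 0 := by omega
    exact Or.inl ⟨∅, Finset.empty_subset _, by simp [ha], by simp⟩
  | succ N ih =>
    intro a b W hab hW
    rcases Nat.eq_zero_or_pos a with ha | ha
    · exact Or.inl ⟨∅, Finset.empty_subset _, by simp [ha], by simp⟩
    rcases Nat.eq_zero_or_pos b with hb | hb
    · exact Or.inr ⟨∅, Finset.empty_subset _, by simp [hb], by simp⟩
    have hWne : W.Nonempty := Finset.card_pos.1 (lt_of_lt_of_le (pow_pos (by norm_num) _) hW)
    obtain ⟨v, hv⟩ := hWne
    set A := (W.erase v).filter (fun u => G.Adj v u) with hA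
    set B := (W.erase v).filter (fun u => ¬ G.Adj v u) with hB
    have hABcard : A.card + B.card = W.card - 1 := by
      rw [hA, hB, Finset.card_filter_add_card_filter_not, Finset.card_erase_of_mem hv]
    have hpow : 2 ^ (a + b) = 2 * 2 ^ N := by
      rw [hab, pow_succ, mul_comm]
    have hcases : 2 ^ N ≤ A.card ∨ 2 ^ N ≤ B.card := by
      by_contra hc
      push_neg at hc
      omega
    rcases hcases with hAc | hBc
    · obtain ⟨a', rfl⟩ : ∃ a', a = a' + 1 := ⟨a - 1, by omega⟩
      rcases ih a' b A (by omega) (by rw [show a' + b = N by omega]; exact hAc) with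
        ⟨T, hTA, hTc, hTadj⟩ | ⟨T, hTA, hTc, hTadj⟩
      · refine Or.inl ⟨insert v T, ?_, ?_, ?_⟩
        · refine Finset.insert_subset hv (hTA.trans ?_)
          exact (Finset.filter_subset _ _).trans (Finset.erase_subset _ _)
        · rw [Finset.card_insert_of_notMem, hTc]
          intro hvT
          exact Finset.notMem_erase v W ((Finset.filter_subset _ _) (hTA hvT))
        · intro x hx y hy hxy
          rcases Finset.mem_insert.1 hx with rfl | hxT
          · rcases Finset.mem_insert.1 hy with rfl | hyT
            · exact absurd rfl hxy
            · exact (Finset.mem_filter.1 (hTA hyT)).2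
          · rcases Finset.mem_insert.1 hy with rfl | hyT
            · exact ((Finset.mem_filter.1 (hTA hxT)).2).symm
            · exact hTadj x hxT y hyT hxy
      · exact Or.inr ⟨T, hTA.trans ((Finset.filter_subset _ _).trans (Finset.erase_subset _ _)),
          hTc, hTadj⟩
    · obtain ⟨b', rfl⟩ : ∃ b', b = b' + 1 := ⟨b - 1, by omega⟩
      rcases ih a b' B (by omega) (by rw [show a + b' = N by omega]; exact hBc) with
        ⟨T, hTB, hTc, hTadj⟩ | ⟨T, hTB, hTc, hTadj⟩
      · exact Or.inl ⟨T, hTB.trans ((Finset.filter_subset _ _).trans (Finset.erase_subset _ _)),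
          hTc, hTadj⟩
      · refine Or.inr ⟨insert v T, ?_, ?_, ?_⟩
        · refine Finset.insert_subset hv (hTB.trans ?_)
          exact (Finset.filter_subset _ _).trans (Finset.erase_subset _ _)
        · rw [Finset.card_insert_of_notMem, hTc]
          intro hvT
          exact Finset.notMem_erase v W ((Finset.filter_subset _ _) (hTB hvT))
        · intro x hx y hy hxy
          rcases Finset.mem_insert.1 hx with rfl | hxT
          · rcases Finset.mem_insert.1 hy with rfl | hyT
            · exact absurd rfl hxy
            · exact (Finset.mem_filter.1 (hTB hyT)).2
          · rcases Finset.mem_insert.1 hy with rfl | hyT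
            · exact fun hadj => (Finset.mem_filter.1 (hTB hxT)).2 hadj.symm
            · exact hTadj x hxT y hyT hxy

/-- In a `K_{s,s}`-free graph, every big set contains an independent set of any fixed size. -/
lemma indep_of_no_kss (G : SimpleGraph (Fin n)) {s : ℕ} (hs : 1 ≤ s)
    (hK : ¬ HasCopy G (Kss s)) (h : ℕ) (W : Finset (Fin n))
    (hW : 2 ^ (2 * s + h) ≤ W.card) :
    ∃ T ⊆ W, T.card = h ∧ ∀ x ∈ T, ∀ y ∈ T, x ≠ y → ¬ G.Adj x y := by
  rcases ram G (2 * s + h) (2 * s) h W rfl hW with ⟨T, hTW, hTc, hTadj⟩ | ok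
  · exfalso
    obtain ⟨S₁, hS₁T, hS₁c⟩ := Finset.exists_subset_card_eq (s := T) (n := s) (by omega)
    have hS₂c : (T \ S₁).card = s := by
      rw [Finset.card_sdiff_of_subset hS₁T, hTc, hS₁c]; omega
    refine hK (kss_of G hS₁c hS₂c (Finset.disjoint_sdiff) ?_)
    intro x hx y hy
    have hyT : y ∈ T := (Finset.sdiff_subset) hy
    have hxy : x ≠ y := fun hxy => (Finset.mem_sdiff.1 hy).2 (hxy ▸ hx)
    exact hTadj x (hS₁T hx) y hyT hxy
  · exact ok

/-- The Kővári–Sós–Turán style double-counting bound. -/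
lemma count_lemma (G : SimpleGraph (Fin n)) {s : ℕ} (hs : 1 ≤ s)
    (hK : ¬ HasCopy G (Kss s)) (Wc X : Finset (Fin n)) (d : ℕ)
    (hdisj : Disjoint Wc X)
    (hdeg : ∀ w ∈ Wc, d ≤ (X.filter (fun x => G.Adj w x)).card) :
    Wc.card * (d + 1 - s) ^ s ≤ (s - 1) * X.card ^ s := by
  have key : ∀ S ∈ X.powersetCard s,
      (Wc.filter (fun w => S ⊆ X.filter (fun x => G.Adj w x))).card ≤ s - 1 := by
    intro S hS
    by_contra hgt
    push_neg at hgt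
    obtain ⟨hSX, hSc⟩ := Finset.mem_powersetCard.1 hS
    obtain ⟨T, hT, hTc⟩ := Finset.exists_subset_card_eq
      (s := Wc.filter (fun w => S ⊆ X.filter (fun x => G.Adj w x))) (n := s) (by omega)
    have hTW : T ⊆ Wc := hT.trans (Finset.filter_subset _ _)
    refine hK (kss_of G hSc hTc ?_ ?_)
    · exact Finset.disjoint_of_subset_left hSX (Finset.disjoint_of_subset_right hTW hdisj.symm)
    · intro x hx y hy
      have hy' := Finset.mem_filter.1 (hT hy)
      have := hy'.2 hx
      exact ((Finset.mem_filter.1 this).2).symm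
  have h1 : (∑ S ∈ X.powersetCard s,
      (Wc.filter (fun w => S ⊆ X.filter (fun x => G.Adj w x))).card)
      ≤ (X.powersetCard s).card * (s - 1) := by
    rw [← smul_eq_mul]
    exact Finset.sum_le_card_nsmul _ _ _ key
  have h2 : ∀ w ∈ Wc, d.choose s ≤
      ((X.powersetCard s).filter (fun S => S ⊆ X.filter (fun x => G.Adj w x))).card := by
    intro w hw
    have hsub : (X.filter (fun x => G.Adj w x)).powersetCard s ⊆
        (X.powersetCard s).filter (fun S => S ⊆ X.filter (fun x => G.Adj w x)) := by
      intro S hS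
      obtain ⟨h1', h2'⟩ := Finset.mem_powersetCard.1 hS
      exact Finset.mem_filter.2 ⟨Finset.mem_powersetCard.2
        ⟨h1'.trans (Finset.filter_subset _ _), h2'⟩, h1'⟩
    calc d.choose s ≤ (X.filter (fun x => G.Adj w x)).card.choose s :=
          Nat.choose_le_choose _ (hdeg w hw)
      _ = ((X.filter (fun x => G.Adj w x)).powersetCard s).card :=
          (Finset.card_powersetCard _ _).symm
      _ ≤ _ := Finset.card_le_card hsub
  have h3 : Wc.card * d.choose s ≤ ∑ w ∈ Wc,
      ((X.powersetCard s).filter (fun S => S ⊆ X.filter (fun x => G.Adj w x))).card := by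
    calc Wc.card * d.choose s = ∑ _w ∈ Wc, d.choose s := by
          rw [Finset.sum_const, smul_eq_mul]
      _ ≤ _ := Finset.sum_le_sum h2
  have h4 : (∑ w ∈ Wc,
      ((X.powersetCard s).filter (fun S => S ⊆ X.filter (fun x => G.Adj w x))).card)
      = ∑ S ∈ X.powersetCard s,
        (Wc.filter (fun w => S ⊆ X.filter (fun x => G.Adj w x))).card := by
    simp_rw [Finset.card_filter]
    exact Finset.sum_comm
  have h5 : Wc.card * d.choose s ≤ (s - 1) * X.card.choose s := by
    rw [Finset.card_powersetCard] at h1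
    calc Wc.card * d.choose s ≤ _ := h3
      _ = _ := h4
      _ ≤ X.card.choose s * (s - 1) := h1
      _ = (s - 1) * X.card.choose s := mul_comm _ _
  calc Wc.card * (d + 1 - s) ^ s ≤ Wc.card * d.descFactorial s := by
        exact Nat.mul_le_mul_left _ (Nat.pow_sub_le_descFactorial d s)
    _ = Wc.card * (s.factorial * d.choose s) := by
        rw [Nat.descFactorial_eq_factorial_mul_choose]
    _ = s.factorial * (Wc.card * d.choose s) := by ring
    _ ≤ s.factorial * ((s - 1) * X.card.choose s) := Nat.mul_le_mul_left _ h5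
    _ = (s - 1) * (s.factorial * X.card.choose s) := by ring
    _ = (s - 1) * X.card.descFactorial s := by
        rw [Nat.descFactorial_eq_factorial_mul_choose]
    _ ≤ (s - 1) * X.card ^ s := Nat.mul_le_mul_left _ (Nat.descFactorial_le_pow _ _)

end Core
/-! ### Numeric constants -/

/-- Bound on the size of a dominating set extracted in the peeling argument. -/
def hN (s h : ℕ) : ℕ := h + 2 ^ (2 * s + h)

/-- Bound on the size of the residual set in the peeling argument. -/
def PoneN (s h : ℕ) : ℕ := (s - 1) * (2 * s * hN s h) ^ s + 1

def TT (s a b : ℕ) : ℕ := (s + 1) * (2 * a * b) ^ s + s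
def MM (s a b : ℕ) : ℕ := 2 * TT s a b
def PP (s a b : ℕ) : ℕ := b * MM s a b
def aaN (s a b : ℕ) : ℕ := PP s a b + PP s a b * b

lemma num1 (s a b : ℕ) (hs : 2 ≤ s) (ha : 1 ≤ a) (hb : 1 ≤ b) :
    (s - 1) * (PP s a b * a) ^ s < PP s a b * (MM s a b + 1 - s) ^ s := by
  set T := TT s a b with hT
  have hTs : s ≤ T := by rw [hT]; unfold TT; exact Nat.le_add_left s _
  have hApos : 1 ≤ (2 * a * b) ^ s := Nat.one_le_pow _ _ (by positivity)
  have hTge : (s + 1) * (2 * a * b) ^ s ≤ T := by rw [hT]; unfold TT; exact Nat.le_add_right _ _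
  have hTpos : 0 < T := by omega
  have key : (s - 1) * (2 * a * b) ^ s < 2 * b * T := by
    have h1 : (s - 1) * (2 * a * b) ^ s < 2 * ((s + 1) * (2 * a * b) ^ s) := by
      have : s - 1 < 2 * (s + 1) := by omega
      calc (s - 1) * (2 * a * b) ^ s < (2 * (s + 1)) * (2 * a * b) ^ s :=
            (Nat.mul_lt_mul_right (by omega)).2 this
        _ = 2 * ((s + 1) * (2 * a * b) ^ s) := by ring
    calc (s - 1) * (2 * a * b) ^ s < 2 * ((s + 1) * (2 * a * b) ^ s) := h1
      _ ≤ 2 * T := Nat.mul_le_mul_left _ hTge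
      _ ≤ 2 * b * T := by
          have : 2 * T ≤ b * (2 * T) := Nat.le_mul_of_pos_left _ (by omega)
          calc 2 * T ≤ b * (2 * T) := this
            _ = 2 * b * T := by ring
  have hPPa : PP s a b * a = (2 * a * b) * T := by unfold PP MM; rw [← hT]; ring
  have hMM : T ≤ MM s a b + 1 - s := by unfold MM; rw [← hT]; omega
  calc (s - 1) * (PP s a b * a) ^ s = (s - 1) * ((2 * a * b) ^ s * T ^ s) := by
        rw [hPPa, mul_pow]
    _ = ((s - 1) * (2 * a * b) ^ s) * T ^ s := by ring
    _ < (2 * b * T) * T ^ s := (Nat.mul_lt_mul_right (pow_pos hTpos s)).2 key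
    _ = PP s a b * T ^ s := by unfold PP MM; rw [← hT]; ring
    _ ≤ PP s a b * (MM s a b + 1 - s) ^ s :=
        Nat.mul_le_mul_left _ (Nat.pow_le_pow_left hMM s)

section ZLemma

variable {n : ℕ} {β : Type*} [Fintype β]

/-- The peeling lemma: if `G∣W` has no induced copy of `H` inside `W`, then the number of
edges inside `W` is bounded by the extremal number plus a linear term. -/
lemma zrec (G : SimpleGraph (Fin n)) (H : SimpleGraph β)
    (s : ℕ) (hs : 2 ≤ s) (hK : ¬ HasCopy G (Kss s)) (r : ℕ) :
    ∀ (W X : Finset (Fin n)), Disjoint W X →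
      (∀ v ∈ W, 2 * s ≤ (X.filter (fun x => G.Adj v x)).card + r) →
      X.card + r * hN s (Fintype.card β) ≤ 2 * s * hN s (Fintype.card β) →
      ¬ IndCopyIn G H W →
      edgeCount (restrictTo G W) ≤ exIndNum s n H
        + r * hN s (Fintype.card β) * n
        + PoneN s (Fintype.card β) * PoneN s (Fintype.card β) := by
  induction r with
  | zero =>
    intro W X hdisj hdeg hX hno
    have hdeg' : ∀ v ∈ W, 2 * s ≤ (X.filter (fun x => G.Adj v x)).card := by
      intro v hv; have := hdeg v hv; omega
    have hE := count_lemma G (by omega) hK W X (2 * s) hdisj hdeg'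
    have he1 : 2 * s + 1 - s = s + 1 := by omega
    rw [he1] at hE
    have hXc : X.card ≤ 2 * s * hN s (Fintype.card β) := by simpa using hX
    have h2 : (s - 1) * X.card ^ s ≤ (s - 1) * (2 * s * hN s (Fintype.card β)) ^ s :=
      Nat.mul_le_mul_left _ (Nat.pow_le_pow_left hXc s)
    have h3 : W.card ≤ W.card * (s + 1) ^ s :=
      Nat.le_mul_of_pos_right _ (pow_pos (by omega) s)
    have hWcard : W.card ≤ (s - 1) * (2 * s * hN s (Fintype.card β)) ^ s :=
      le_trans h3 (le_trans hE h2)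
    have hP : W.card < PoneN s (Fintype.card β) := by
      unfold PoneN; exact Nat.lt_succ_of_le hWcard
    calc edgeCount (restrictTo G W) ≤ W.card * W.card := edgeCount_restrict_le G W
      _ ≤ PoneN s (Fintype.card β) * PoneN s (Fintype.card β) := Nat.mul_le_mul hP.le hP.le
      _ ≤ exIndNum s n H + 0 * hN s (Fintype.card β) * n
            + PoneN s (Fintype.card β) * PoneN s (Fintype.card β) := by
          simpa using Nat.le_add_left _ (exIndNum s n H)
  | succ r ih =>
    intro W X hdisj hdeg hX hno
    by_cases hgood : HasInducedCopy (restrictTo G W) H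
    case neg =>
      have hK' : ¬ HasCopy (restrictTo G W) (Kss s) :=
        fun h => hK (hasCopy_mono (fun a b hab => (restrictTo_adj.mp hab).1) h)
      have hle := le_exIndNum (restrictTo G W) hK' hgood
      exact hle.trans ((Nat.le_add_right _ _).trans (Nat.le_add_right _ _))
    case pos =>
    obtain ⟨f, hf⟩ := hgood
    set J : Finset β := Finset.univ.filter (fun a => f a ∉ W) with hJdef
    have hmemW : ∀ a, a ∉ J → f a ∈ W := by
      intro a ha; by_contra hfa; exact ha (Finset.mem_filter.2 ⟨Finset.mem_univ _, hfa⟩)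
    have hJmem : ∀ a ∈ J, f a ∉ W := fun a ha => (Finset.mem_filter.1 ha).2
    have hiso : ∀ a ∈ J, ∀ b, ¬ H.Adj a b := by
      intro a ha b hab
      exact hJmem a ha ((hf a b).2 hab).2.1
    have hGiff : ∀ a b, a ∉ J → b ∉ J → (G.Adj (f a) (f b) ↔ H.Adj a b) := by
      intro a b ha hb
      rw [← hf a b]
      exact ⟨fun hg => ⟨hg, hmemW a ha, hmemW b hb⟩, fun hg => hg.1⟩
    set Y : Finset (Fin n) := (Finset.univ.filter (fun a => f a ∈ W)).image f with hYdef
    have hYW : ∀ y ∈ Y, y ∈ W := by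
      intro y hy; obtain ⟨a, ha, rfl⟩ := Finset.mem_image.1 hy
      exact (Finset.mem_filter.1 ha).2
    have hfY : ∀ a, a ∉ J → f a ∈ Y := by
      intro a ha
      exact Finset.mem_image.2 ⟨a, Finset.mem_filter.2 ⟨Finset.mem_univ _, hmemW a ha⟩, rfl⟩
    have hYcard : Y.card ≤ Fintype.card β :=
      le_trans Finset.card_image_le (le_trans (Finset.card_filter_le _ _) (by simp))
    set Z : Finset (Fin n) := W.filter (fun v => v ∉ Y ∧ ∀ y ∈ Y, ¬ G.Adj v y) with hZdef
    have hZprop : ∀ z ∈ Z, z ∉ Y ∧ ∀ y ∈ Y, ¬ G.Adj z y := fun z hz => (Finset.mem_filter.1 hz).2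
    have hZW : Z ⊆ W := Finset.filter_subset _ _
    have hZcard : Z.card < 2 ^ (2 * s + Fintype.card β) := by
      by_contra hle
      push_neg at hle
      obtain ⟨T, hTZ, hTc, hTind⟩ := indep_of_no_kss G (by omega) hK (Fintype.card β) Z hle
      have hJc : J.card ≤ T.card := by
        rw [hTc]; exact le_trans (Finset.card_le_univ J) (by simp)
      obtain ⟨T', hT'T, hT'c⟩ := Finset.exists_subset_card_eq (s := T) (n := J.card) hJc
      have hcards : J.card = T'.card := hT'c.symm
      let e := Finset.equivOfCardEq hcards
      let g : β → Fin n := fun a => if h : a ∈ J then (e ⟨a, h⟩ : Fin n) else f a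
      have hgJ : ∀ a (h : a ∈ J), g a = (e ⟨a, h⟩ : Fin n) := fun a h => dif_pos h
      have hgNJ : ∀ a, a ∉ J → g a = f a := fun a h => dif_neg h
      have hgZ : ∀ a (ha : a ∈ J), g a ∈ Z := by
        intro a ha; rw [hgJ a ha]
        exact hTZ (hT'T (e ⟨a, ha⟩).2)
      have hgT : ∀ a (ha : a ∈ J), g a ∈ T := by
        intro a ha; rw [hgJ a ha]
        exact hT'T (e ⟨a, ha⟩).2
      have hginj : Function.Injective g := by
        intro a b hab
        by_cases ha : a ∈ J <;> by_cases hb : b ∈ J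
        · rw [hgJ a ha, hgJ b hb] at hab
          have h1 : (⟨a, ha⟩ : ↥J) = ⟨b, hb⟩ := e.injective (Subtype.coe_injective hab)
          exact congrArg Subtype.val h1
        · exfalso
          rw [hgJ a ha, hgNJ b hb] at hab
          have h1 : (e ⟨a, ha⟩ : Fin n) ∈ Z := hTZ (hT'T (e ⟨a, ha⟩).2)
          have h2 : f b ∈ Y := hfY b hb
          exact (hZprop _ h1).1 (hab ▸ h2)
        · exfalso
          rw [hgNJ a ha, hgJ b hb] at hab
          have h1 : (e ⟨b, hb⟩ : Fin n) ∈ Z := hTZ (hT'T (e ⟨b, hb⟩).2)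
          have h2 : f a ∈ Y := hfY a ha
          exact (hZprop _ h1).1 (hab.symm ▸ h2)
        · rw [hgNJ a ha, hgNJ b hb] at hab
          exact f.injective hab
      refine hno ⟨⟨g, hginj⟩, ?_, ?_⟩
      · intro a
        show g a ∈ W
        by_cases ha : a ∈ J
        · exact hZW (hgZ a ha)
        · rw [hgNJ a ha]; exact hmemW a ha
      · intro a b
        show G.Adj (g a) (g b) ↔ H.Adj a b
        by_cases ha : a ∈ J <;> by_cases hb : b ∈ J
        · refine iff_of_false ?_ (hiso a ha b)
          by_cases hab : a = b
          · subst hab; exact G.irrefl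
          · have hne : g a ≠ g b := fun h => hab (hginj h)
            exact hTind _ (hgT a ha) _ (hgT b hb) hne
        · refine iff_of_false ?_ (hiso a ha b)
          intro hadj
          have h1 : g a ∈ Z := hgZ a ha
          have h2 : g b ∈ Y := by rw [hgNJ b hb]; exact hfY b hb
          exact (hZprop _ h1).2 _ h2 hadj
        · refine iff_of_false ?_ (fun hadj => hiso b hb a hadj.symm)
          intro hadj
          have h1 : g b ∈ Z := hgZ b hb
          have h2 : g a ∈ Y := by rw [hgNJ a ha]; exact hfY a ha
          exact (hZprop _ h1).2 _ h2 hadj.symm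
        · rw [hgNJ a ha, hgNJ b hb]
          exact hGiff a b ha hb
    set D : Finset (Fin n) := Y ∪ Z with hDdef
    have hDW : D ⊆ W := Finset.union_subset (fun y hy => hYW y hy) hZW
    have hDc : D.card ≤ hN s (Fintype.card β) := by
      refine le_trans (Finset.card_union_le _ _) ?_
      unfold hN
      exact Nat.add_le_add hYcard hZcard.le
    have hXD : Disjoint X D := Finset.disjoint_of_subset_right hDW hdisj.symm
    have hdom : ∀ v ∈ W \ D, ∃ y ∈ Y, G.Adj v y := by
      intro v hv
      obtain ⟨hvW, hvD⟩ := Finset.mem_sdiff.1 hv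
      have hvY : v ∉ Y := fun h => hvD (Finset.mem_union_left _ h)
      have hvZ : v ∉ Z := fun h => hvD (Finset.mem_union_right _ h)
      by_contra hc
      push_neg at hc
      exact hvZ (Finset.mem_filter.2 ⟨hvW, hvY, fun y hy hadj => hc y hy hadj⟩)
    have hdisj' : Disjoint (W \ D) (X ∪ D) := by
      refine Finset.disjoint_union_right.2 ⟨?_, Finset.sdiff_disjoint⟩
      exact Finset.disjoint_of_subset_left (Finset.sdiff_subset) hdisj
    have hdeg' : ∀ v ∈ W \ D, 2 * s ≤ ((X ∪ D).filter (fun x => G.Adj v x)).card + r := by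
      intro v hv
      obtain ⟨y, hyY, hadj⟩ := hdom v hv
      have hvW : v ∈ W := (Finset.mem_sdiff.1 hv).1
      have hdisjf : Disjoint (X.filter (fun x => G.Adj v x)) (D.filter (fun x => G.Adj v x)) :=
        Finset.disjoint_filter_filter hXD
      have hcardu : ((X ∪ D).filter (fun x => G.Adj v x)).card =
          (X.filter (fun x => G.Adj v x)).card + (D.filter (fun x => G.Adj v x)).card := by
        rw [Finset.filter_union, Finset.card_union_of_disjoint hdisjf]
      have hyD : y ∈ D.filter (fun x => G.Adj v x) :=
        Finset.mem_filter.2 ⟨Finset.mem_union_left _ hyY, hadj⟩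
      have h1 : 1 ≤ (D.filter (fun x => G.Adj v x)).card := Finset.card_pos.2 ⟨y, hyD⟩
      have h2 := hdeg v hvW
      omega
    have hxc : (X ∪ D).card + r * hN s (Fintype.card β) ≤ 2 * s * hN s (Fintype.card β) := by
      have h1 := Finset.card_union_le X D
      have h2 : (r + 1) * hN s (Fintype.card β)
          = r * hN s (Fintype.card β) + hN s (Fintype.card β) := by ring
      rw [h2] at hX
      calc (X ∪ D).card + r * hN s (Fintype.card β)
          ≤ (X.card + D.card) + r * hN s (Fintype.card β) := Nat.add_le_add_right h1 _
        _ ≤ (X.card + hN s (Fintype.card β)) + r * hN s (Fintype.card β) :=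
            Nat.add_le_add_right (Nat.add_le_add_left hDc _) _
        _ = X.card + (r * hN s (Fintype.card β) + hN s (Fintype.card β)) := by ring
        _ ≤ 2 * s * hN s (Fintype.card β) := hX
    have hno' : ¬ IndCopyIn G H (W \ D) := fun hcopy => hno (hcopy.mono (Finset.sdiff_subset))
    have ihapp := ih (W \ D) (X ∪ D) hdisj' hdeg' hxc hno'
    calc edgeCount (restrictTo G W) ≤ edgeCount (restrictTo G (W \ D)) + D.card * n :=
          edgeCount_restrict_sdiff G W D
      _ ≤ (exIndNum s n H + r * hN s (Fintype.card β) * n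
            + PoneN s (Fintype.card β) * PoneN s (Fintype.card β))
            + hN s (Fintype.card β) * n :=
          Nat.add_le_add ihapp (Nat.mul_le_mul_right _ hDc)
      _ = exIndNum s n H + (r + 1) * hN s (Fintype.card β) * n
            + PoneN s (Fintype.card β) * PoneN s (Fintype.card β) := by ring

end ZLemma
section Side

variable {n : ℕ}

lemma not_sum_adj_lr {α β : Type*} {G : SimpleGraph α} {H : SimpleGraph β} {u : α} {v : β} :
    ¬ (G ⊕g H).Adj (Sum.inl u) (Sum.inr v) := by simp

lemma not_sum_adj_rl {α β : Type*} {G : SimpleGraph α} {H : SimpleGraph β} {u : β} {v : α} :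
    ¬ (G ⊕g H).Adj (Sum.inr u) (Sum.inl v) := by simp

lemma sum_adj_ll {α β : Type*} {G : SimpleGraph α} {H : SimpleGraph β} {u v : α} :
    (G ⊕g H).Adj (Sum.inl u) (Sum.inl v) ↔ G.Adj u v := by simp

lemma sum_adj_rr {α β : Type*} {G : SimpleGraph α} {H : SimpleGraph β} {u v : β} :
    (G ⊕g H).Adj (Sum.inr u) (Sum.inr v) ↔ H.Adj u v := by simp

lemma side {β : Type*} [Fintype β] (G : SimpleGraph (Fin n)) (H : SimpleGraph β)
    (s q : ℕ) (hs : 2 ≤ s) (hβ : 1 ≤ Fintype.card β) (hK : ¬ HasCopy G (Kss s))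
    (hfam : ∀ F : Finset (Finset (Fin n)), (∀ A ∈ F, IsCopyImg G H A) →
      (∀ A ∈ F, ∀ B ∈ F, A ≠ B → Disjoint A B) → F.card < q) :
    edgeCount G ≤ exIndNum s n H
      + (q * Fintype.card β + 2 * s * hN s (Fintype.card β)) * n
      + PoneN s (Fintype.card β) * PoneN s (Fintype.card β) := by
  set 𝒮 : Finset (Finset (Finset (Fin n))) := Finset.univ.filter
    (fun F => (∀ A ∈ F, IsCopyImg G H A) ∧ (∀ A ∈ F, ∀ B ∈ F, A ≠ B → Disjoint A B)) with hSdef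
  have hSne : 𝒮.Nonempty := ⟨∅, Finset.mem_filter.2 ⟨Finset.mem_univ _, by simp, by simp⟩⟩
  obtain ⟨F₀, hF₀, hmax⟩ := Finset.exists_max_image 𝒮 Finset.card hSne
  have hF₀p := Finset.mem_filter.1 hF₀
  have hF₀copy : ∀ A ∈ F₀, IsCopyImg G H A := hF₀p.2.1
  have hF₀disj : ∀ A ∈ F₀, ∀ B ∈ F₀, A ≠ B → Disjoint A B := hF₀p.2.2
  have hF₀card : F₀.card < q := hfam F₀ hF₀copy hF₀disj
  set U : Finset (Fin n) := F₀.biUnion id with hUdef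
  have hUcard : U.card ≤ q * Fintype.card β := by
    calc U.card ≤ ∑ A ∈ F₀, (id A).card := Finset.card_biUnion_le
      _ ≤ F₀.card * Fintype.card β := by
          rw [← smul_eq_mul]
          exact Finset.sum_le_card_nsmul _ _ _ (fun A hA => le_of_eq (hF₀copy A hA).card)
      _ ≤ q * Fintype.card β := Nat.mul_le_mul_right _ hF₀card.le
  have hAU : ∀ M ∈ F₀, M ⊆ U := fun M hM => Finset.subset_biUnion_of_mem id hM
  have hhit : ∀ A, IsCopyImg G H A → ¬ Disjoint A U := by
    intro A hA hdisj
    have hAF : A ∉ F₀ := by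
      intro hmem
      have h1 : A ⊆ U := hAU A hmem
      have h2 : A = ∅ :=
        Finset.eq_empty_of_forall_notMem (fun x hx => Finset.disjoint_left.1 hdisj hx (h1 hx))
      have h3 := hA.card
      rw [h2] at h3
      simp at h3
      omega
    have hins : insert A F₀ ∈ 𝒮 := by
      rw [hSdef]
      refine Finset.mem_filter.2 ⟨Finset.mem_univ _, ?_, ?_⟩
      · intro B hB
        rcases Finset.mem_insert.1 hB with rfl | hB'
        · exact hA
        · exact hF₀copy B hB'
      · intro B hB C hC hBC
        rcases Finset.mem_insert.1 hB with rfl | hB' <;>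
          rcases Finset.mem_insert.1 hC with rfl | hC'
        · exact absurd rfl hBC
        · exact Finset.disjoint_of_subset_right (hAU C hC') hdisj
        · exact (Finset.disjoint_of_subset_right (hAU B hB') hdisj).symm
        · exact hF₀disj B hB' C hC' hBC
    have hcontr := hmax _ hins
    rw [Finset.card_insert_of_notMem hAF] at hcontr
    omega
  have hno : ¬ IndCopyIn G H (Finset.univ \ U) := by
    rintro ⟨f, hmem, hiff⟩
    refine hhit (Finset.univ.image f) ⟨f, hiff, rfl⟩ ?_
    refine Finset.disjoint_left.2 (fun x hx => ?_)
    obtain ⟨a, -, rfl⟩ := Finset.mem_image.1 hx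
    exact (Finset.mem_sdiff.1 (hmem a)).2
  have hz := zrec G H s hs hK (2 * s) (Finset.univ \ U) ∅ (Finset.disjoint_empty_right _)
    (by intro v hv; simp) (by simp) hno
  calc edgeCount G = edgeCount (restrictTo G Finset.univ) := by rw [restrictTo_univ]
    _ ≤ edgeCount (restrictTo G (Finset.univ \ U)) + U.card * n :=
        edgeCount_restrict_sdiff G _ U
    _ ≤ (exIndNum s n H + 2 * s * hN s (Fintype.card β) * n
          + PoneN s (Fintype.card β) * PoneN s (Fintype.card β))
          + (q * Fintype.card β) * n :=
        Nat.add_le_add hz (Nat.mul_le_mul_right _ hUcard)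
    _ = _ := by ring

lemma dich {β₁ β₂ : Type*} [Fintype β₁] [Fintype β₂] (G : SimpleGraph (Fin n))
    (H₁ : SimpleGraph β₁) (H₂ : SimpleGraph β₂) (s : ℕ) (hs : 2 ≤ s)
    (h1 : 1 ≤ Fintype.card β₁) (h2 : 1 ≤ Fintype.card β₂)
    (hK : ¬ HasCopy G (Kss s)) (hind : ¬ HasInducedCopy G (H₁ ⊕g H₂))
    (FA : Finset (Finset (Fin n))) (hFAc : ∀ A ∈ FA, IsCopyImg G H₁ A)
    (hFAd : ∀ A ∈ FA, ∀ B ∈ FA, A ≠ B → Disjoint A B)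
    (hFAcard : aaN s (Fintype.card β₁) (Fintype.card β₂) ≤ FA.card)
    (FB : Finset (Finset (Fin n))) (hFBc : ∀ A ∈ FB, IsCopyImg G H₂ A)
    (hFBd : ∀ A ∈ FB, ∀ B ∈ FB, A ≠ B → Disjoint A B)
    (hFBcard : PP s (Fintype.card β₁) (Fintype.card β₂) ≤ FB.card) : False := by
  set a1 := Fintype.card β₁ with ha1
  set a2 := Fintype.card β₂ with ha2
  set P := PP s a1 a2 with hPdef
  have hTpos : 0 < TT s a1 a2 := by unfold TT; omega
  have hMpos : 0 < MM s a1 a2 := by unfold MM; omega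
  have hPpos : 0 < P := by rw [hPdef]; unfold PP; exact Nat.mul_pos (by omega) hMpos
  have haa : aaN s a1 a2 = P + P * a2 := by rw [hPdef]; unfold aaN; rfl
  -- a nonempty vertex
  obtain ⟨A₀, hA₀⟩ : FA.Nonempty := Finset.card_pos.1 (by omega)
  have hA₀c : A₀.card = a1 := (hFAc A₀ hA₀).card
  obtain ⟨v₀, -⟩ : A₀.Nonempty := Finset.card_pos.1 (by omega)
  have hFinne : Nonempty (Fin n) := ⟨v₀⟩
  -- subfamily of B of size exactly P
  obtain ⟨FB', hFB'v, hFB'c⟩ := Finset.exists_subset_card_eq (s := FB) (n := P) hFBcard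
  set UB : Finset (Fin n) := FB'.biUnion id with hUBdef
  have hUBc : UB.card ≤ P * a2 := by
    calc UB.card ≤ ∑ B ∈ FB', (id B).card := Finset.card_biUnion_le
      _ ≤ FB'.card * a2 := by
          rw [← smul_eq_mul]
          exact Finset.sum_le_card_nsmul _ _ _
            (fun B hB => le_of_eq (hFBc B (hFB'v hB)).card)
      _ = P * a2 := by rw [hFB'c]
  -- A's meeting UB are few
  have hbad : (FA.filter (fun A => ¬ Disjoint A UB)).card ≤ UB.card := by
    refine Finset.card_le_card_of_injOn
      (fun A => if h : (A ∩ UB).Nonempty then (A ∩ UB).min' h else v₀) ?_ ?_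
    · intro A hA
      have hA' := Finset.mem_filter.1 hA
      have hne : (A ∩ UB).Nonempty := Finset.not_disjoint_iff_nonempty_inter.1 hA'.2
      dsimp only
      rw [dif_pos hne]
      exact (Finset.mem_inter.1 ((A ∩ UB).min'_mem hne)).2
    · intro A hA A' hA' heq
      have h1 := Finset.mem_filter.1 (Finset.mem_coe.1 hA)
      have h2 := Finset.mem_filter.1 (Finset.mem_coe.1 hA')
      have hne1 : (A ∩ UB).Nonempty := Finset.not_disjoint_iff_nonempty_inter.1 h1.2
      have hne2 : (A' ∩ UB).Nonempty := Finset.not_disjoint_iff_nonempty_inter.1 h2.2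
      dsimp only at heq
      rw [dif_pos hne1, dif_pos hne2] at heq
      by_contra hneq
      have d := hFAd A h1.1 A' h2.1 hneq
      have hm1 : (A ∩ UB).min' hne1 ∈ A := (Finset.mem_inter.1 ((A ∩ UB).min'_mem hne1)).1
      have hm2 : (A' ∩ UB).min' hne2 ∈ A' := (Finset.mem_inter.1 ((A' ∩ UB).min'_mem hne2)).1
      exact Finset.disjoint_left.1 d hm1 (heq ▸ hm2)
  have hsplit := Finset.card_filter_add_card_filter_not
    (s := FA) (p := fun A => Disjoint A UB)
  have hgood : P ≤ (FA.filter (fun A => Disjoint A UB)).card := by omega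
  obtain ⟨FA', hFA'g, hFA'c⟩ := Finset.exists_subset_card_eq (n := P) hgood
  have hFA'FA : FA' ⊆ FA := hFA'g.trans (Finset.filter_subset _ _)
  have hABdisj : ∀ A ∈ FA', ∀ B ∈ FB', Disjoint A B := by
    intro A hA B hB
    have hAg : Disjoint A UB := (Finset.mem_filter.1 (hFA'g hA)).2
    exact Finset.disjoint_of_subset_right (Finset.subset_biUnion_of_mem id hB) hAg
  have hcross : ∀ A ∈ FA', ∀ B ∈ FB', ∃ x ∈ A, ∃ y ∈ B, G.Adj x y := by
    intro A hA B hB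
    by_contra hc
    push_neg at hc
    obtain ⟨fA, hfAiff, hfAim⟩ := hFAc A (hFA'FA hA)
    obtain ⟨fB, hfBiff, hfBim⟩ := hFBc B (hFB'v hB)
    have hfAA : ∀ u, fA u ∈ A := by
      intro u; rw [hfAim]; exact Finset.mem_image_of_mem _ (Finset.mem_univ _)
    have hfBB : ∀ u, fB u ∈ B := by
      intro u; rw [hfBim]; exact Finset.mem_image_of_mem _ (Finset.mem_univ _)
    refine hind ⟨⟨Sum.elim fA fB, ?_⟩, ?_⟩
    · rintro (u | u) (v | v) h
      · simp only [Sum.elim_inl] at h; rw [fA.injective h]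
      · exfalso
        simp only [Sum.elim_inl, Sum.elim_inr] at h
        exact Finset.disjoint_left.1 (hABdisj A hA B hB) (hfAA u) (h ▸ hfBB v)
      · exfalso
        simp only [Sum.elim_inl, Sum.elim_inr] at h
        exact Finset.disjoint_left.1 (hABdisj A hA B hB) (hfAA v) (h.symm ▸ hfBB u)
      · simp only [Sum.elim_inr] at h; rw [fB.injective h]
    · rintro (u | u) (v | v)
      · rw [sum_adj_ll]; exact hfAiff u v
      · exact iff_of_false (hc _ (hfAA u) _ (hfBB v)) not_sum_adj_lr
      · exact iff_of_false (fun h => hc _ (hfAA v) _ (hfBB u) h.symm) not_sum_adj_rl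
      · rw [sum_adj_rr]; exact hfBiff u v
  set X : Finset (Fin n) := FA'.biUnion id with hXdef
  have hXcard : X.card ≤ P * a1 := by
    calc X.card ≤ ∑ A ∈ FA', (id A).card := Finset.card_biUnion_le
      _ ≤ FA'.card * a1 := by
          rw [← smul_eq_mul]
          exact Finset.sum_le_card_nsmul _ _ _
            (fun A hA => le_of_eq (hFAc A (hFA'FA hA)).card)
      _ = P * a1 := by rw [hFA'c]
  have hXA : ∀ A ∈ FA', A ⊆ X := fun A hA => Finset.subset_biUnion_of_mem id hA
  have hyB : ∀ B ∈ FB', ∃ y ∈ B, MM s a1 a2 ≤ (X.filter (fun x => G.Adj y x)).card := by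
    intro B hB
    have hch : ∀ A ∈ FA', ∃ pr : Fin n × Fin n, pr.1 ∈ A ∧ pr.2 ∈ B ∧ G.Adj pr.1 pr.2 := by
      intro A hA
      obtain ⟨x, hx, y, hy, hxy⟩ := hcross A hA B hB
      exact ⟨(x, y), hx, hy, hxy⟩
    choose! pr hp1 hp2 hp3 using hch
    have hlt : B.card * (MM s a1 a2 - 1) < FA'.card := by
      have hBc : B.card = a2 := (hFBc B (hFB'v hB)).card
      rw [hBc, hFA'c, hPdef]
      unfold PP
      exact mul_lt_mul_of_pos_left (by omega) (by omega)
    obtain ⟨y, hyB', hfib⟩ :=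
      Finset.exists_lt_card_fiber_of_mul_lt_card_of_maps_to hp2 hlt
    refine ⟨y, hyB', ?_⟩
    have hsub : MM s a1 a2 ≤ (FA'.filter (fun A => (pr A).2 = y)).card := by omega
    refine le_trans hsub (Finset.card_le_card_of_injOn (fun A => (pr A).1) ?_ ?_)
    · intro A hA
      have hA' : A ∈ FA' := (Finset.mem_filter.1 hA).1
      have heq : (pr A).2 = y := (Finset.mem_filter.1 hA).2
      refine Finset.mem_filter.2 ⟨hXA A hA' (hp1 A hA'), ?_⟩
      have hadj := hp3 A hA'
      rw [heq] at hadj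
      exact hadj.symm
    · intro A hA A' hA' heq
      dsimp only at heq
      have hA1 : A ∈ FA' := (Finset.mem_filter.1 (Finset.mem_coe.1 hA)).1
      have hA2 : A' ∈ FA' := (Finset.mem_filter.1 (Finset.mem_coe.1 hA')).1
      by_contra hneq
      have d := hFAd A (hFA'FA hA1) A' (hFA'FA hA2) hneq
      exact Finset.disjoint_left.1 d (hp1 A hA1) (heq ▸ hp1 A' hA2)
  choose! yb hyb1 hyb2 using hyB
  set Wb : Finset (Fin n) := FB'.image yb with hWbdef
  have hWbc : Wb.card = P := by
    rw [hWbdef]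
    rw [Finset.card_image_of_injOn, hFB'c]
    intro B hB B' hB' heq
    by_contra hneq
    have d := hFBd B (hFB'v (Finset.mem_coe.1 hB)) B' (hFB'v (Finset.mem_coe.1 hB')) hneq
    exact Finset.disjoint_left.1 d (hyb1 B (Finset.mem_coe.1 hB))
      (heq ▸ hyb1 B' (Finset.mem_coe.1 hB'))
  have hWbdisj : Disjoint Wb X := by
    refine Finset.disjoint_left.2 (fun w hw hwX => ?_)
    obtain ⟨B, hB, rfl⟩ := Finset.mem_image.1 hw
    obtain ⟨A, hA, hwA⟩ := Finset.mem_biUnion.1 hwX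
    exact Finset.disjoint_left.1 (hABdisj A hA B hB) hwA (hyb1 B hB)
  have hdegW : ∀ w ∈ Wb, MM s a1 a2 ≤ (X.filter (fun x => G.Adj w x)).card := by
    intro w hw
    obtain ⟨B, hB, rfl⟩ := Finset.mem_image.1 hw
    exact hyb2 B hB
  have hEE := count_lemma G (by omega) hK Wb X (MM s a1 a2) hWbdisj hdegW
  rw [hWbc] at hEE
  have hmono : (s - 1) * X.card ^ s ≤ (s - 1) * (P * a1) ^ s :=
    Nat.mul_le_mul_left _ (Nat.pow_le_pow_left hXcard s)
  have hnum := num1 s a1 a2 hs h1 h2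
  rw [← hPdef] at hnum
  omega

end Side
theorem stmt2 {β₁ β₂ : Type*} [Fintype β₁] [Fintype β₂] (s : ℕ)
    (H₁ : SimpleGraph β₁) (H₂ : SimpleGraph β₂) :
    ∃ C : ℕ, ∀ n : ℕ,
      exIndNum s n (H₁ ⊕g H₂) ≤ C * (exIndNum s n H₁ + exIndNum s n H₂ + n) := by
  classical
  set a1 := Fintype.card β₁ with ha1
  set a2 := Fintype.card β₂ with ha2
  set C : ℕ := aaN s a1 a2 * a1 + PP s a1 a2 * a2
    + 2 * s * hN s a1 + 2 * s * hN s a2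
    + PoneN s a1 * PoneN s a1 + PoneN s a2 * PoneN s a2 + 1 with hC
  have hCpos : 0 < C := by rw [hC]; omega
  refine ⟨C, fun n => ?_⟩
  have hmem : ∀ m ∈ {m | ∃ G : SimpleGraph (Fin n),
      ¬ HasCopy G (Kss s) ∧ ¬ HasInducedCopy G (H₁ ⊕g H₂) ∧ edgeCount G = m},
      m ≤ C * (exIndNum s n H₁ + exIndNum s n H₂ + n) := by
    rintro m ⟨G, hK, hind, rfl⟩
    rcases Nat.eq_zero_or_pos n with hn0 | hn
    · subst hn0
      have h0 := edgeCount_le_sq G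
      simp only [Nat.mul_zero, Nat.le_zero] at h0
      rw [h0]
      exact Nat.zero_le _
    by_cases hs : 2 ≤ s
    swap
    · -- s = 0 or s = 1
      interval_cases s
      · exact absurd (⟨Function.Embedding.ofIsEmpty, fun a b h => isEmptyElim a⟩ :
          HasCopy G (Kss 0)) hK
      · have hedge : G.edgeSet = ∅ := by
          by_contra hne
          obtain ⟨e, he⟩ := Set.nonempty_iff_ne_empty.2 hne
          revert he
          refine Sym2.ind (fun x y he => ?_) e
          rw [SimpleGraph.mem_edgeSet] at he
          refine hK ⟨⟨Sum.elim (fun _ => x) (fun _ => y), ?_⟩, ?_⟩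
          · rintro (i | i) (j | j) hij
            · rw [Subsingleton.elim i j]
            · exfalso; exact he.ne (by simpa using hij)
            · exfalso
              simp only [Sum.elim_inl, Sum.elim_inr] at hij
              exact he.ne (hij.symm)
            · rw [Subsingleton.elim i j]
          · rintro (i | i) (j | j) hadj
            · simp [Kss] at hadj
            · exact he
            · exact he.symm
            · simp [Kss] at hadj
        have h0 : edgeCount G = 0 := by
          rw [edgeCount, hedge]
          simp
        rw [h0]
        exact Nat.zero_le _
    by_cases h1 : 1 ≤ a1
    swap
    · have hempty : IsEmpty β₁ := by
        rw [← Fintype.card_eq_zero_iff]; omega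
      have hH2 : ¬ HasInducedCopy G H₂ := by
        rintro ⟨f, hf⟩
        refine hind ⟨⟨Sum.elim (fun a => (hempty.elim a)) f, ?_⟩, ?_⟩
        · rintro (u | u) (v | v) h
          · exact (hempty.elim u)
          · exact (hempty.elim u)
          · exact (hempty.elim v)
          · simp only [Sum.elim_inr] at h
            rw [f.injective h]
        · rintro (u | u) (v | v)
          · exact (hempty.elim u)
          · exact (hempty.elim u)
          · exact (hempty.elim v)
          · rw [sum_adj_rr]; exact hf u v
      have hle := le_exIndNum G hK hH2
      have hexp : C * (exIndNum s n H₁ + exIndNum s n H₂ + n)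
          = C * exIndNum s n H₁ + C * exIndNum s n H₂ + C * n := by ring
      have h2' : exIndNum s n H₂ ≤ C * exIndNum s n H₂ := Nat.le_mul_of_pos_left _ hCpos
      omega
    by_cases h2 : 1 ≤ a2
    swap
    · have hempty : IsEmpty β₂ := by
        rw [← Fintype.card_eq_zero_iff]; omega
      have hH1 : ¬ HasInducedCopy G H₁ := by
        rintro ⟨f, hf⟩
        refine hind ⟨⟨Sum.elim f (fun a => (hempty.elim a)), ?_⟩, ?_⟩
        · rintro (u | u) (v | v) h
          · simp only [Sum.elim_inl] at h
            rw [f.injective h]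
          · exact (hempty.elim v)
          · exact (hempty.elim u)
          · exact (hempty.elim u)
        · rintro (u | u) (v | v)
          · rw [sum_adj_ll]; exact hf u v
          · exact (hempty.elim v)
          · exact (hempty.elim u)
          · exact (hempty.elim u)
      have hle := le_exIndNum G hK hH1
      have hexp : C * (exIndNum s n H₁ + exIndNum s n H₂ + n)
          = C * exIndNum s n H₁ + C * exIndNum s n H₂ + C * n := by ring
      have h1' : exIndNum s n H₁ ≤ C * exIndNum s n H₁ := Nat.le_mul_of_pos_left _ hCpos
      omega
    -- main case
    have hexp : C * (exIndNum s n H₁ + exIndNum s n H₂ + n)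
        = C * exIndNum s n H₁ + C * exIndNum s n H₂ + C * n := by ring
    by_cases hFa : ∃ F : Finset (Finset (Fin n)), (∀ A ∈ F, IsCopyImg G H₁ A) ∧
        (∀ A ∈ F, ∀ B ∈ F, A ≠ B → Disjoint A B) ∧ aaN s a1 a2 ≤ F.card
    · obtain ⟨FA, hFAc, hFAd, hFAcard⟩ := hFa
      have hfamB : ∀ F : Finset (Finset (Fin n)), (∀ A ∈ F, IsCopyImg G H₂ A) →
          (∀ A ∈ F, ∀ B ∈ F, A ≠ B → Disjoint A B) → F.card < PP s a1 a2 := by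
        intro F hc hd
        by_contra hge
        push_neg at hge
        exact dich G H₁ H₂ s hs h1 h2 hK hind FA hFAc hFAd hFAcard F hc hd hge
      have hside := side G H₂ s (PP s a1 a2) hs h2 hK hfamB
      rw [← ha2] at hside
      have hd2 : PoneN s a2 * PoneN s a2 ≤ PoneN s a2 * PoneN s a2 * n :=
        Nat.le_mul_of_pos_right _ hn
      have hcC : (PP s a1 a2 * a2 + 2 * s * hN s a2 + PoneN s a2 * PoneN s a2) * n
          ≤ C * n := Nat.mul_le_mul_right _ (by rw [hC]; omega)
      have hex : exIndNum s n H₂ ≤ C * exIndNum s n H₂ := Nat.le_mul_of_pos_left _ hCpos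
      have hstep : edgeCount G ≤ exIndNum s n H₂
          + (PP s a1 a2 * a2 + 2 * s * hN s a2 + PoneN s a2 * PoneN s a2) * n := by
        have hb : (PP s a1 a2 * a2 + 2 * s * hN s a2) * n + PoneN s a2 * PoneN s a2 * n
            = (PP s a1 a2 * a2 + 2 * s * hN s a2 + PoneN s a2 * PoneN s a2) * n := by ring
        omega
      omega
    · push_neg at hFa
      have hside := side G H₁ s (aaN s a1 a2) hs h1 hK hFa
      rw [← ha1] at hside
      have hd1 : PoneN s a1 * PoneN s a1 ≤ PoneN s a1 * PoneN s a1 * n :=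
        Nat.le_mul_of_pos_right _ hn
      have hcC : (aaN s a1 a2 * a1 + 2 * s * hN s a1 + PoneN s a1 * PoneN s a1) * n
          ≤ C * n := Nat.mul_le_mul_right _ (by rw [hC]; omega)
      have hex : exIndNum s n H₁ ≤ C * exIndNum s n H₁ := Nat.le_mul_of_pos_left _ hCpos
      have hstep : edgeCount G ≤ exIndNum s n H₁
          + (aaN s a1 a2 * a1 + 2 * s * hN s a1 + PoneN s a1 * PoneN s a1) * n := by
        have hb : (aaN s a1 a2 * a1 + 2 * s * hN s a1) * n + PoneN s a1 * PoneN s a1 * n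
            = (aaN s a1 a2 * a1 + 2 * s * hN s a1 + PoneN s a1 * PoneN s a1) * n := by ring
        omega
      omega
  rcases Set.eq_empty_or_nonempty {m | ∃ G : SimpleGraph (Fin n),
      ¬ HasCopy G (Kss s) ∧ ¬ HasInducedCopy G (H₁ ⊕g H₂) ∧ edgeCount G = m} with he | hne
  · have : exIndNum s n (H₁ ⊕g H₂) = sSup (∅ : Set ℕ) := by
      rw [exIndNum, he]
    rw [this, csSup_empty]
    exact bot_le
  · exact csSup_le hne hmem
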